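/- Let Γ₁ and Γ₂ be subgroups of SL(2, ℂ), and suppose there exists g ∈ GL(2, ℂ) such that the intersection Γ₁ ∩ gΓ₂g⁻¹ has finite index both in Γ₁ and in gΓ₂g⁻¹. Then every element of Γ₁ has trace an algebraic integer if and only if every element of Γ₂ has trace an algebraic integer. -/

import Mathlib

open Matrix Polynomial

-- quadratic integrality lemma
lemma int_of_quad (x c : ℂ) (hc : IsIntegral ℤ c) (h : x ^ 2 - c * x + 1 = 0) :
    IsIntegral ℤ x := by
  let S := integralClosure ℤ ℂ
  have hx : IsIntegral S x := by
    refine ⟨X ^ 2 - C (⟨c, hc⟩ : S) * X + 1, ?_, ?_⟩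
    · monicity!
    · have : (algebraMap S ℂ) ⟨c, hc⟩ = c := rfl
      simp [this]
      linear_combination h
  exact isIntegral_trans (R := ℤ) (A := S) x hx

-- Cayley-Hamilton for 2x2, det 1
lemma sq_eq (A : Matrix (Fin 2) (Fin 2) ℂ) (hA : A.det = 1) :
    A * A = (trace A) • A - 1 := by
  rw [det_fin_two] at hA
  ext i j
  rw [mul_apply, Fin.sum_univ_two, trace_fin_two]
  fin_cases i <;> fin_cases j <;>
    simp only [Matrix.sub_apply, Matrix.smul_apply, Matrix.one_apply, smul_eq_mul] <;>
    norm_num <;>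
    first
      | ring1
      | linear_combination -hA

lemma trace_pow_eq (A : Matrix (Fin 2) (Fin 2) ℂ) (hA : A.det = 1) (l m : ℂ)
    (hsum : l + m = trace A) (hprod : l * m = 1) :
    ∀ k : ℕ, trace (A ^ k) = l ^ k + m ^ k := by
  have key : ∀ k : ℕ, trace (A ^ k) = l ^ k + m ^ k ∧
      trace (A ^ (k + 1)) = l ^ (k + 1) + m ^ (k + 1) := by
    intro k
    induction k with
    | zero => constructor <;> simp [hsum, trace_one] <;> norm_num
    | succ n ih =>
      refine ⟨ih.2, ?_⟩
      have : A ^ (n + 2) = (trace A) • (A ^ (n + 1)) - A ^ n := by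
        rw [pow_add, pow_two, sq_eq A hA]
        rw [Matrix.mul_sub, Matrix.mul_smul, mul_one, ← pow_succ]
      rw [this, trace_sub, trace_smul, smul_eq_mul, ih.1, ih.2, ← hsum]
      linear_combination (l ^ n + m ^ n) * hprod
  exact fun k => (key k).1

lemma trace_int_of_pow_int (A : Matrix.SpecialLinearGroup (Fin 2) ℂ) {k : ℕ} (hk : 0 < k)
    (h : IsIntegral ℤ (trace ((A ^ k : Matrix.SpecialLinearGroup (Fin 2) ℂ) :
      Matrix (Fin 2) (Fin 2) ℂ))) :
    IsIntegral ℤ (trace (A : Matrix (Fin 2) (Fin 2) ℂ)) := by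
  set M : Matrix (Fin 2) (Fin 2) ℂ := (A : Matrix (Fin 2) (Fin 2) ℂ) with hM
  have hdet : M.det = 1 := A.2
  set t : ℂ := trace M with ht
  -- get an eigenvalue l
  obtain ⟨l, hl⟩ := IsAlgClosed.exists_root (k := ℂ) (X ^ 2 - C t * X + C 1) (by
    have : (X ^ 2 - C t * X + C 1 : ℂ[X]).degree = 2 := by compute_degree!
    rw [this]; exact two_ne_zero)
  have hleq : l ^ 2 - t * l + 1 = 0 := by
    simpa using hl
  set m : ℂ := t - l with hm
  have hsum : l + m = t := by ring
  have hprod : l * m = 1 := by rw [hm]; linear_combination -hleq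
  have htr : trace (M ^ k) = l ^ k + m ^ k := trace_pow_eq M hdet l m hsum hprod k
  have hMk : trace ((A ^ k : Matrix.SpecialLinearGroup (Fin 2) ℂ) :
      Matrix (Fin 2) (Fin 2) ℂ) = trace (M ^ k) := by
    rw [Matrix.SpecialLinearGroup.coe_pow]
  rw [hMk, htr] at h
  have hprodk : l ^ k * m ^ k = 1 := by rw [← mul_pow, hprod, one_pow]
  have hlk : IsIntegral ℤ (l ^ k) :=
    int_of_quad (l ^ k) (l ^ k + m ^ k) h (by linear_combination -hprodk)
  have hmk : IsIntegral ℤ (m ^ k) := by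
    have : m ^ k = (l ^ k + m ^ k) - l ^ k := by ring
    rw [this]; exact h.sub hlk
  have hli : IsIntegral ℤ l := IsIntegral.of_pow hk hlk
  have hmi : IsIntegral ℤ m := IsIntegral.of_pow hk hmk
  rw [← hsum]
  exact hli.add hmi

lemma transfer (Γ Δ : Subgroup (Matrix.SpecialLinearGroup (Fin 2) ℂ))
    (hrel : Δ.relIndex Γ ≠ 0)
    (hΔ : ∀ γ ∈ Δ, IsIntegral ℤ (Matrix.trace (γ : Matrix (Fin 2) (Fin 2) ℂ))) :
    ∀ γ ∈ Γ, IsIntegral ℤ (Matrix.trace (γ : Matrix (Fin 2) (Fin 2) ℂ)) := by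
  intro γ hγ
  obtain ⟨n, hn0, -, hmem⟩ := Subgroup.exists_pow_mem_of_relIndex_ne_zero hrel hγ
  exact trace_int_of_pow_int γ hn0 (hΔ (γ ^ n) hmem.1)

/-- Let `Γ₁, Γ₂ ≤ SL(2, ℂ)` and suppose there exists `g ∈ GL(2, ℂ)` such that
`Γ₁ ∩ gΓ₂g⁻¹` has finite index both in `Γ₁` and in `gΓ₂g⁻¹`. Then every element
of `Γ₁` has algebraic-integer trace iff every element of `Γ₂` does. -/
theorem stmt_5 (Γ₁ Γ₂ : Subgroup (Matrix.SpecialLinearGroup (Fin 2) ℂ))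
    (g : GL (Fin 2) ℂ)
    (Γ₂' : Subgroup (Matrix.SpecialLinearGroup (Fin 2) ℂ))
    (hΓ₂' : ∀ x : Matrix.SpecialLinearGroup (Fin 2) ℂ,
      x ∈ Γ₂' ↔ ∃ y ∈ Γ₂,
        (x : Matrix (Fin 2) (Fin 2) ℂ) =
          (g : Matrix (Fin 2) (Fin 2) ℂ) * (y : Matrix (Fin 2) (Fin 2) ℂ) *
            ((g⁻¹ : GL (Fin 2) ℂ) : Matrix (Fin 2) (Fin 2) ℂ))
    (hfin₁ : (Γ₁ ⊓ Γ₂').relIndex Γ₁ ≠ 0)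
    (hfin₂ : (Γ₁ ⊓ Γ₂').relIndex Γ₂' ≠ 0) :
    (∀ γ ∈ Γ₁, IsIntegral ℤ (Matrix.trace (γ : Matrix (Fin 2) (Fin 2) ℂ))) ↔
      (∀ γ ∈ Γ₂, IsIntegral ℤ (Matrix.trace (γ : Matrix (Fin 2) (Fin 2) ℂ))) := by
  set G : Matrix (Fin 2) (Fin 2) ℂ := (g : Matrix (Fin 2) (Fin 2) ℂ) with hG
  set Gi : Matrix (Fin 2) (Fin 2) ℂ := ((g⁻¹ : GL (Fin 2) ℂ) : Matrix (Fin 2) (Fin 2) ℂ) with hGi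
  have hGGi : G * Gi = 1 := g.mul_inv
  have hGiG : Gi * G = 1 := g.inv_mul
  have traceConj : ∀ Y : Matrix (Fin 2) (Fin 2) ℂ,
      Matrix.trace (G * Y * Gi) = Matrix.trace Y := by
    intro Y
    rw [Matrix.trace_mul_comm, ← mul_assoc, hGiG, one_mul]
  have key : (∀ γ ∈ Γ₂', IsIntegral ℤ (Matrix.trace (γ : Matrix (Fin 2) (Fin 2) ℂ))) ↔
      (∀ γ ∈ Γ₂, IsIntegral ℤ (Matrix.trace (γ : Matrix (Fin 2) (Fin 2) ℂ))) := by
    constructor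
    · intro h y hy
      have hdet : (G * (y : Matrix (Fin 2) (Fin 2) ℂ) * Gi).det = 1 := by
        rw [Matrix.det_mul, Matrix.det_mul, y.2, mul_one, ← Matrix.det_mul, hGGi,
          Matrix.det_one]
      set x : Matrix.SpecialLinearGroup (Fin 2) ℂ :=
        ⟨G * (y : Matrix (Fin 2) (Fin 2) ℂ) * Gi, hdet⟩ with hx
      have hxΓ : x ∈ Γ₂' := (hΓ₂' x).2 ⟨y, hy, rfl⟩
      have := h x hxΓ
      rwa [hx, traceConj] at this
    · intro h x hx
      obtain ⟨y, hy, hxy⟩ := (hΓ₂' x).1 hx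
      have : Matrix.trace (x : Matrix (Fin 2) (Fin 2) ℂ) =
          Matrix.trace (y : Matrix (Fin 2) (Fin 2) ℂ) := by
        rw [hxy, traceConj]
      rw [this]
      exact h y hy
  constructor
  · intro h1
    refine key.1 (transfer Γ₂' (Γ₁ ⊓ Γ₂') hfin₂ ?_)
    exact fun γ hγ => h1 γ hγ.1
  · intro h2
    refine transfer Γ₁ (Γ₁ ⊓ Γ₂') hfin₁ ?_
    exact fun γ hγ => key.2 h2 γ hγ.2
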